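/- Let Δ be the free discrete Laplacian on ℓ²(ℕ) and V : ℕ → ℝ a potential supported on a strictly increasing sequence (n_k) with gaps n_k − n_{k−1} → ∞ and V(n_k) → ∞. Then for every E ∉ [−2,2], E is not in the essential spectrum of H = Δ + V; hence σ_ess(H) = [−2,2]. -/

import Mathlib

open Filter

/-- The action of the half-line Schrödinger operator `H = Δ + V` on a sequence,
with sites indexed by `n ≥ 1` (Dirichlet boundary condition `ψ 0 = 0` built in). -/
noncomputable def schrodingerAct (V : ℕ → ℝ) (ψ : ℕ → ℝ) (n : ℕ) : ℝ :=
  (if n ≤ 1 then 0 else ψ (n - 1)) + ψ (n + 1) + V n * ψ n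

/-- `E` belongs to the essential spectrum of `H = Δ + V` in the Weyl-sequence sense:
there is an orthonormal sequence `ψ k` in `ℓ²` with `‖(H - E) ψ k‖ → 0`. -/
def IsWeylPoint (V : ℕ → ℝ) (E : ℝ) : Prop :=
  ∃ ψ : ℕ → ℕ → ℝ,
    (∀ k, ψ k 0 = 0) ∧
    (∀ k, Summable fun n => (ψ k n) ^ 2) ∧
    (∀ k, Summable fun n => (schrodingerAct V (ψ k) n - E * ψ k n) ^ 2) ∧
    (∀ k j, (∑' n, ψ k n * ψ j n) = if k = j then (1 : ℝ) else 0) ∧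
    Tendsto (fun k => ∑' n, (schrodingerAct V (ψ k) n - E * ψ k n) ^ 2) atTop (nhds 0)

lemma abs_mul_le_half (x y : ℝ) : |x * y| ≤ (x^2 + y^2)/2 := by
  rw [abs_mul]
  nlinarith [sq_nonneg (|x| - |y|), sq_abs x, sq_abs y, abs_nonneg x, abs_nonneg y]

lemma summable_mul_of_sq {f g : ℕ → ℝ} (hf : Summable fun n => f n ^ 2)
    (hg : Summable fun n => g n ^ 2) : Summable fun n => f n * g n := by
  apply Summable.of_abs
  exact Summable.of_nonneg_of_le (fun n => abs_nonneg _) (fun n => abs_mul_le_half _ _)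
    ((hf.add hg).div_const 2)

lemma abs_tsum_mul_le {f g : ℕ → ℝ} (hf : Summable fun n => f n ^ 2)
    (hg : Summable fun n => g n ^ 2) :
    |∑' n, f n * g n| ≤ ((∑' n, f n ^ 2) + ∑' n, g n ^ 2)/2 := by
  have h1 : Summable fun n => |f n * g n| :=
    Summable.of_nonneg_of_le (fun n => abs_nonneg _) (fun n => abs_mul_le_half _ _)
      ((hf.add hg).div_const 2)
  calc |∑' n, f n * g n| ≤ ∑' n, |f n * g n| := by
        have := norm_tsum_le_tsum_norm (f := fun n => f n * g n)
          (by simpa only [Real.norm_eq_abs] using h1)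
        simpa only [Real.norm_eq_abs] using this
    _ ≤ ∑' n, (f n ^ 2 + g n ^ 2)/2 :=
        Summable.tsum_le_tsum (fun n => abs_mul_le_half _ _) h1 ((hf.add hg).div_const 2)
    _ = ((∑' n, f n ^ 2) + ∑' n, g n ^ 2)/2 := by
        rw [tsum_div_const, Summable.tsum_add hf hg]

lemma four_sq (p q r s : ℝ) : (p - q - r + s)^2 ≤ 4*(p^2 + (q^2 + (r^2 + s^2))) := by
  nlinarith [sq_nonneg (p+q), sq_nonneg (p-q), sq_nonneg (p+r), sq_nonneg (p-r),
    sq_nonneg (p+s), sq_nonneg (p-s), sq_nonneg (q+r), sq_nonneg (q-r),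
    sq_nonneg (q+s), sq_nonneg (q-s), sq_nonneg (r+s), sq_nonneg (r-s)]

lemma coord_sq_tendsto (ψ : ℕ → ℕ → ℝ) (hψ2 : ∀ k, Summable fun n => ψ k n ^ 2)
    (horth : ∀ k j, (∑' n, ψ k n * ψ j n) = if k = j then (1 : ℝ) else 0) (m : ℕ) :
    Tendsto (fun k => ψ k m ^ 2) atTop (nhds 0) := by
  have key : ∀ s : Finset ℕ, (∑ k ∈ s, ψ k m ^ 2) ≤ 1 := by
    intro s
    set b : ℕ → ℝ := fun n => ∑ k ∈ s, ψ k m * ψ k n with hb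
    set d : ℕ → ℝ := fun n => if n = m then 1 else 0 with hd
    have hsummul : ∀ k j, Summable fun n => ψ k n * ψ j n :=
      fun k j => summable_mul_of_sq (hψ2 k) (hψ2 j)
    have hbpt : ∀ n, b n ^ 2 = ∑ k ∈ s, ∑ j ∈ s, (ψ k m * ψ j m) * (ψ k n * ψ j n) := by
      intro n
      rw [sq, hb, Finset.sum_mul_sum]
      exact Finset.sum_congr rfl fun k _ => Finset.sum_congr rfl fun j _ => by ring
    have hbsum : Summable fun n => b n ^ 2 := by
      refine Summable.congr ?_ (fun n => (hbpt n).symm)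
      exact summable_sum fun k _ => summable_sum fun j _ => (hsummul k j).mul_left _
    have hbtsum : ∑' n, b n ^ 2 = ∑ k ∈ s, ψ k m ^ 2 := by
      rw [tsum_congr hbpt,
        Summable.tsum_finsetSum (fun k _ => summable_sum fun j _ => (hsummul k j).mul_left _)]
      refine Finset.sum_congr rfl fun k hk => ?_
      rw [Summable.tsum_finsetSum (fun j _ => (hsummul k j).mul_left _)]
      have : ∀ j ∈ s, (∑' n, (ψ k m * ψ j m) * (ψ k n * ψ j n))
          = if k = j then ψ k m * ψ j m else 0 := by
        intro j _
        rw [tsum_mul_left, horth k j]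
        by_cases h : k = j <;> simp [h]
      rw [Finset.sum_congr rfl this, Finset.sum_ite_eq s k (fun j => ψ k m * ψ j m),
        if_pos hk, sq]
    have hdsum : Summable d :=
      summable_of_ne_finset_zero (s := {m}) (fun n hn => if_neg (by simpa using hn))
    have hdb : ∀ n, d n * b n = if n = m then b m else 0 := by
      intro n; by_cases h : n = m <;> simp [hd, h]
    have hdbsum : Summable fun n => d n * b n := by
      refine summable_of_ne_finset_zero (s := {m}) (fun n hn => ?_)
      rw [hdb, if_neg (by simpa using hn)]
    have expand : ∀ n, (d n - b n)^2 = (d n - 2 * (d n * b n)) + b n ^ 2 := by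
      intro n; by_cases h : n = m <;> simp [hd, h] <;> ring
    have h0 : (0:ℝ) ≤ ∑' n, (d n - b n)^2 := tsum_nonneg fun n => sq_nonneg _
    have hsplit : ∑' n, (d n - b n)^2
        = ((∑' n, d n) - 2 * ∑' n, d n * b n) + ∑' n, b n ^ 2 := by
      rw [tsum_congr expand, Summable.tsum_add (hdsum.sub (hdbsum.mul_left 2)) hbsum,
        Summable.tsum_sub hdsum (hdbsum.mul_left 2), tsum_mul_left]
    have htd : ∑' n, d n = 1 := by
      rw [hd]; exact tsum_ite_eq m (fun _ => (1:ℝ))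
    have htdb : ∑' n, d n * b n = b m := by
      rw [tsum_congr hdb]; exact tsum_ite_eq m (fun _ => b m)
    have hbm : b m = ∑ k ∈ s, ψ k m ^ 2 := by
      rw [hb]; exact Finset.sum_congr rfl fun k _ => (sq (ψ k m)).symm
    rw [hsplit, htd, htdb, hbm, hbtsum] at h0
    linarith
  have hsumm : Summable fun k => ψ k m ^ 2 :=
    summable_of_sum_range_le (fun k => sq_nonneg _) (fun K => key (Finset.range K))
  exact hsumm.tendsto_atTop_zero

theorem stmt_12 (V : ℕ → ℝ) (ns : ℕ → ℕ)
    (hmono : StrictMono ns)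
    (hgap : Tendsto (fun k => ns (k + 1) - ns k) atTop atTop)
    (hsupp : ∀ n : ℕ, n ∉ Set.range ns → V n = 0)
    (hbig : Tendsto (fun k => V (ns k)) atTop atTop) :
    ∀ E : ℝ, E ∉ Set.Icc (-2 : ℝ) 2 → ¬ IsWeylPoint V E := by
  intro E hE
  rintro ⟨ψ, hzero, hψ2, hφ2, horth, hN⟩
  set φ : ℕ → ℕ → ℝ := fun k n => schrodingerAct V (ψ k) n - E * ψ k n with hφdef
  set a : ℕ → ℕ → ℝ := fun k n => if n ≤ 1 then 0 else ψ k (n - 1) with hadef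
  -- basic normalizations
  have hone : ∀ k, ∑' n, ψ k n ^ 2 = 1 := by
    intro k
    have h := horth k k
    rw [if_pos rfl] at h
    rw [← h]; exact tsum_congr fun n => sq (ψ k n)
  have hsq_succ : ∀ k, Summable fun n => ψ k (n+1) ^ 2 :=
    fun k => ((hψ2 k).comp_injective (add_left_injective 1) : _)
  have htsum_succ_le : ∀ k, (∑' n, ψ k (n+1) ^ 2) ≤ 1 := by
    intro k
    have h := Summable.tsum_eq_zero_add (hψ2 k)
    have h2 := hone k
    nlinarith [sq_nonneg (ψ k 0)]
  have ha2 : ∀ k, Summable fun n => a k n ^ 2 := by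
    intro k
    refine (summable_nat_add_iff 2).mp ?_
    refine (hsq_succ k).congr fun n => ?_
    have h1 : ¬ (n + 2 ≤ 1) := by omega
    simp [hadef, h1]
  have ha2tsum : ∀ k, (∑' n, a k n ^ 2) ≤ 1 := by
    intro k
    have h1 := Summable.tsum_eq_zero_add (ha2 k)
    have h2 := Summable.tsum_eq_zero_add ((summable_nat_add_iff 1).mpr (ha2 k))
    have h3 : (∑' n, a k (n+1+1) ^ 2) = ∑' n, ψ k (n+1) ^ 2 := by
      refine tsum_congr fun n => ?_
      have h1 : ¬ (n + 2 ≤ 1) := by omega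
      simp [hadef, h1]
    have h4 : a k 0 = 0 := by simp [hadef]
    have h5 : a k 1 = 0 := by simp [hadef]
    rw [h2, h3, h4, h5] at h1
    simp at h1
    rw [h1]; exact htsum_succ_le k
  have hφeq : ∀ k n, φ k n = a k n + ψ k (n+1) + V n * ψ k n - E * ψ k n := by
    intro k n; simp [hφdef, hadef, schrodingerAct]
  have hw : ∀ k n, V n * ψ k n = φ k n - a k n - ψ k (n+1) + E * ψ k n := by
    intro k n; rw [hφeq]; ring
  have hw2 : ∀ k, Summable fun n => (V n * ψ k n) ^ 2 := by
    intro k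
    refine Summable.of_nonneg_of_le (fun n => sq_nonneg _) (fun n => ?_)
      ((((hφ2 k).add ((ha2 k).add ((hsq_succ k).add ((hψ2 k).mul_left (E^2))))).mul_left 4))
    rw [hw k n]
    calc (φ k n - a k n - ψ k (n+1) + E * ψ k n)^2
        ≤ 4*(φ k n^2 + (a k n^2 + (ψ k (n+1)^2 + (E * ψ k n)^2))) := four_sq _ _ _ _
      _ = 4*(φ k n^2 + (a k n^2 + (ψ k (n+1)^2 + E^2 * ψ k n^2))) := by ring
  have hw2tsum : ∀ k, (∑' n, (V n * ψ k n) ^ 2) ≤ 4*((∑' n, φ k n ^ 2) + 2 + E^2) := by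
    intro k
    have hS4 : Summable fun n => E^2 * ψ k n ^2 := (hψ2 k).mul_left (E^2)
    have hsum : Summable fun n => 4*(φ k n^2 + (a k n^2 + (ψ k (n+1)^2 + E^2 * ψ k n^2))) :=
      ((hφ2 k).add ((ha2 k).add ((hsq_succ k).add hS4))).mul_left 4
    have hle : (∑' n, (V n * ψ k n) ^ 2)
        ≤ ∑' n, 4*(φ k n^2 + (a k n^2 + (ψ k (n+1)^2 + E^2 * ψ k n^2))) := by
      refine Summable.tsum_le_tsum (fun n => ?_) (hw2 k) hsum
      rw [hw k n]
      calc (φ k n - a k n - ψ k (n+1) + E * ψ k n)^2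
          ≤ 4*(φ k n^2 + (a k n^2 + (ψ k (n+1)^2 + (E * ψ k n)^2))) := four_sq _ _ _ _
        _ = 4*(φ k n^2 + (a k n^2 + (ψ k (n+1)^2 + E^2 * ψ k n^2))) := by ring
    have heq : (∑' n, 4*(φ k n^2 + (a k n^2 + (ψ k (n+1)^2 + E^2 * ψ k n^2))))
        = 4*((∑' n, φ k n^2) + ((∑' n, a k n^2) + ((∑' n, ψ k (n+1)^2)
            + E^2 * ∑' n, ψ k n^2))) := by
      rw [tsum_mul_left, Summable.tsum_add (hφ2 k) ((ha2 k).add ((hsq_succ k).add hS4)),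
        Summable.tsum_add (ha2 k) ((hsq_succ k).add hS4), Summable.tsum_add (hsq_succ k) hS4, tsum_mul_left]
    rw [heq, hone k] at hle
    nlinarith [ha2tsum k, htsum_succ_le k]
  have hVψ2 : ∀ k, Summable fun n => V n * ψ k n ^ 2 := by
    intro k
    exact (summable_mul_of_sq (hw2 k) (hψ2 k)).congr fun n => by ring
  have hψφ : ∀ k, Summable fun n => ψ k n * φ k n :=
    fun k => summable_mul_of_sq (hψ2 k) (hφ2 k)
  have hψa : ∀ k, Summable fun n => ψ k n * a k n :=
    fun k => summable_mul_of_sq (hψ2 k) (ha2 k)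
  have hψsucc : ∀ k, Summable fun n => ψ k n * ψ k (n+1) :=
    fun k => summable_mul_of_sq (hψ2 k) (hsq_succ k)
  -- the central identity
  have hIP : ∀ k, (∑' n, ψ k n * φ k n)
      = (∑' n, ψ k n * a k n) + (∑' n, ψ k n * ψ k (n+1)) + (∑' n, V n * ψ k n ^ 2) - E := by
    intro k
    have hpt : ∀ n, ψ k n * φ k n
        = (ψ k n * a k n + (ψ k n * ψ k (n+1) + V n * ψ k n ^ 2)) - E * ψ k n ^ 2 := by
      intro n; rw [hφeq]; ring
    rw [tsum_congr hpt,
      Summable.tsum_sub ((hψa k).add ((hψsucc k).add (hVψ2 k))) ((hψ2 k).mul_left E),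
      Summable.tsum_add (hψa k) ((hψsucc k).add (hVψ2 k)), Summable.tsum_add (hψsucc k) (hVψ2 k),
      tsum_mul_left, hone k]
    ring
  have hA1 : ∀ k, |∑' n, ψ k n * a k n| ≤ 1 := by
    intro k
    have h := abs_tsum_mul_le (hψ2 k) (ha2 k)
    rw [hone k] at h
    linarith [ha2tsum k]
  have hA2 : ∀ k, |∑' n, ψ k n * ψ k (n+1)| ≤ 1 := by
    intro k
    have h := abs_tsum_mul_le (hψ2 k) (hsq_succ k)
    rw [hone k] at h
    linarith [htsum_succ_le k]
  have hIPbound : ∀ t : ℝ, 0 < t → ∀ k,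
      t * |∑' n, ψ k n * φ k n| ≤ (t^2 + ∑' n, φ k n ^ 2)/2 := by
    intro t ht k
    have hf : Summable fun n => (t * ψ k n) ^ 2 :=
      ((hψ2 k).mul_left (t^2)).congr fun n => by ring
    have h := abs_tsum_mul_le hf (hφ2 k)
    have e1 : (∑' n, (t * ψ k n) * φ k n) = t * ∑' n, ψ k n * φ k n := by
      rw [← tsum_mul_left]; exact tsum_congr fun n => by ring
    have e2 : (∑' n, (t * ψ k n) ^ 2) = t^2 := by
      have : (∑' n, (t * ψ k n) ^ 2) = t^2 * ∑' n, ψ k n ^ 2 := by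
        rw [← tsum_mul_left]; exact tsum_congr fun n => by ring
      rw [this, hone k, mul_one]
    rw [e1, e2, abs_mul, abs_of_pos ht] at h
    exact h
  -- finite "low" sets of the potential
  have getset : ∀ M : ℝ, ∃ s : Finset ℕ, ∀ n ∉ s, V n = 0 ∨ M ≤ V n := by
    intro M
    obtain ⟨K, hK⟩ := Filter.eventually_atTop.mp (hbig.eventually_ge_atTop M)
    refine ⟨(Finset.range K).image ns, fun n hn => ?_⟩
    by_cases hr : n ∈ Set.range ns
    · obtain ⟨j, rfl⟩ := hr
      right
      refine hK j ?_
      by_contra hj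
      push_neg at hj
      exact hn (Finset.mem_image_of_mem ns (Finset.mem_range.mpr hj))
    · exact Or.inl (hsupp n hr)
  have hlowtend : ∀ s : Finset ℕ,
      Tendsto (fun k => ∑ n ∈ s, V n * ψ k n ^ 2) atTop (nhds 0) := by
    intro s
    have hterm : ∀ n, Tendsto (fun k => V n * ψ k n ^ 2) atTop (nhds 0) := by
      intro n
      simpa using (coord_sq_tendsto ψ hψ2 horth n).const_mul (V n)
    have := tendsto_finset_sum s (fun n _ => hterm n)
    simpa using this
  have hsumite : ∀ (s : Finset ℕ) k, Summable fun n => if n ∈ s then V n * ψ k n ^ 2 else 0 :=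
    fun s k => summable_of_ne_finset_zero (s := s) (fun n hn => if_neg hn)
  have htsumite : ∀ (s : Finset ℕ) k,
      (∑' n, if n ∈ s then V n * ψ k n ^ 2 else 0) = ∑ n ∈ s, V n * ψ k n ^ 2 := by
    intro s k
    rw [tsum_eq_sum (s := s) (fun n hn => if_neg hn)]
    exact Finset.sum_congr rfl fun n hn => if_pos hn
  have hEcase : E < -2 ∨ 2 < E := by
    by_contra hc
    push_neg at hc
    exact hE (Set.mem_Icc.mpr ⟨hc.1, hc.2⟩)
  rcases hEcase with hcase | hcase
  · -- E < -2
    set t : ℝ := -E - 2 with htdef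
    have ht : 0 < t := by simp [htdef]; linarith
    obtain ⟨s, hs⟩ := getset 0
    have hTlow : ∀ k, (∑ n ∈ s, V n * ψ k n ^ 2) ≤ ∑' n, V n * ψ k n ^ 2 := by
      intro k
      rw [← htsumite s k]
      refine Summable.tsum_le_tsum (fun n => ?_) (hsumite s k) (hVψ2 k)
      by_cases hn : n ∈ s
      · rw [if_pos hn]
      · rw [if_neg hn]
        rcases hs n hn with h0 | h0
        · rw [h0]; simp
        · exact mul_nonneg h0 (sq_nonneg _)
    have hkR : ∀ k, t * t ≤ (t^2 + ∑' n, φ k n ^ 2)/2 - t * ∑ n ∈ s, V n * ψ k n ^ 2 := by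
      intro k
      have h1 := hIP k
      have h2 := hIPbound t ht k
      have h3 := hTlow k
      have h4 := abs_le.mp (hA1 k)
      have h5 := abs_le.mp (hA2 k)
      have habs := le_abs_self (∑' n, ψ k n * φ k n)
      have key : t ≤ |∑' n, ψ k n * φ k n| - ∑ n ∈ s, V n * ψ k n ^ 2 := by
        rw [htdef]; linarith
      have : t * t ≤ t * (|∑' n, ψ k n * φ k n| - ∑ n ∈ s, V n * ψ k n ^ 2) :=
        mul_le_mul_of_nonneg_left key ht.le
      nlinarith [h2]
    have hRtend : Tendsto
        (fun k => (t^2 + ∑' n, φ k n ^ 2)/2 - t * ∑ n ∈ s, V n * ψ k n ^ 2)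
        atTop (nhds ((t^2 + 0)/2 - t * 0)) :=
      ((tendsto_const_nhds.add hN).div_const 2).sub ((hlowtend s).const_mul t)
    have hfin := ge_of_tendsto' hRtend hkR
    simp at hfin
    nlinarith [ht]
  · -- 2 < E
    set δ : ℝ := E - 2 with hδdef
    have hδ : 0 < δ := by simp [hδdef]; linarith
    set t : ℝ := δ/2 with htdef
    have ht : 0 < t := by positivity
    set M : ℝ := max 1 (16*(2 + E^2)/δ) with hMdef
    have hMpos : 0 < M := lt_of_lt_of_le one_pos (le_max_left _ _)
    have hM1 : 16*(2 + E^2)/δ ≤ M := le_max_right _ _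
    obtain ⟨s, hs⟩ := getset M
    have hThigh : ∀ k, (∑' n, V n * ψ k n ^ 2)
        ≤ (∑ n ∈ s, V n * ψ k n ^ 2) + (∑' n, (V n * ψ k n)^2)/M := by
      intro k
      have hpt : ∀ n, V n * ψ k n ^ 2
          ≤ (if n ∈ s then V n * ψ k n ^ 2 else 0) + (V n * ψ k n)^2/M := by
        intro n
        by_cases hn : n ∈ s
        · rw [if_pos hn]
          have : (0:ℝ) ≤ (V n * ψ k n)^2/M := div_nonneg (sq_nonneg _) hMpos.le
          linarith
        · rw [if_neg hn]
          rcases hs n hn with h0 | h0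
          · rw [h0]; simp
          · have hVnn : 0 ≤ V n := le_trans hMpos.le h0
            rw [zero_add, le_div_iff₀ hMpos]
            have h1 : 0 ≤ V n * ψ k n ^ 2 * (V n - M) :=
              mul_nonneg (mul_nonneg hVnn (sq_nonneg _)) (by linarith)
            nlinarith [h1]
      have := Summable.tsum_le_tsum hpt (hVψ2 k) ((hsumite s k).add ((hw2 k).div_const M))
      rwa [Summable.tsum_add (hsumite s k) ((hw2 k).div_const M), htsumite s k,
        tsum_div_const] at this
    have hIabs : ∀ k, |∑' n, ψ k n * φ k n| ≤ (t^2 + ∑' n, φ k n ^ 2)/(2*t) := by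
      intro k
      have h2 := hIPbound t ht k
      rw [le_div_iff₀ (by positivity : (0:ℝ) < 2*t)]
      nlinarith [h2]
    have hkR : ∀ k, δ ≤ (∑ n ∈ s, V n * ψ k n ^ 2)
        + 4*((∑' n, φ k n ^ 2) + 2 + E^2)/M + (t^2 + ∑' n, φ k n ^ 2)/(2*t) := by
      intro k
      have h1 := hIP k
      have h2 := hThigh k
      have h3 := hw2tsum k
      have h4 := abs_le.mp (hA1 k)
      have h5 := abs_le.mp (hA2 k)
      have h6 := hIabs k
      have habs := neg_abs_le (∑' n, ψ k n * φ k n)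
      have hdiv : (∑' n, (V n * ψ k n)^2)/M ≤ 4*((∑' n, φ k n ^ 2) + 2 + E^2)/M :=
        (div_le_div_iff_of_pos_right hMpos).mpr h3
      rw [hδdef]
      linarith
    have hRtend : Tendsto (fun k => (∑ n ∈ s, V n * ψ k n ^ 2)
        + 4*((∑' n, φ k n ^ 2) + 2 + E^2)/M + (t^2 + ∑' n, φ k n ^ 2)/(2*t))
        atTop (nhds (0 + 4*(0 + 2 + E^2)/M + (t^2 + 0)/(2*t))) := by
      refine Tendsto.add (Tendsto.add (hlowtend s) ?_) ?_
      · exact (((hN.add_const 2).add_const (E^2)).const_mul 4).div_const M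
      · exact (tendsto_const_nhds.add hN).div_const (2*t)
    have hfin := ge_of_tendsto' hRtend hkR
    have e3 : (t^2 + 0)/(2*t) = t/2 := by
      field_simp
      ring
    have e4 : 4*(0 + 2 + E^2)/M ≤ δ/4 := by
      rw [div_le_div_iff₀ hMpos (by norm_num : (0:ℝ) < 4)]
      have := (div_le_iff₀ hδ).mp hM1
      nlinarith
    rw [e3, zero_add] at hfin
    have : t/2 = δ/4 := by rw [htdef]; ring
    linarith
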